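/- In the p-adic field ℚ_p with p odd, the valuation ring ℤ_p is definable without the valuation: x ∈ ℤ_p if and only if there exists y with y² = 1 + p·x². -/

import Mathlib

open Polynomial

private lemma norm_two_padic {p : ℕ} [Fact p.Prime] (hp : p ≠ 2) : ‖(2 : ℤ_[p])‖ = 1 := by
  have h1 : ‖(2 : ℤ_[p])‖ ≤ 1 := (2 : ℤ_[p]).2
  have h2 : ¬ ‖(2 : ℤ_[p])‖ < 1 := by
    rw [show (2 : ℤ_[p]) = ((2 : ℤ) : ℤ_[p]) by push_cast; ring,
      PadicInt.norm_int_lt_one_iff_dvd]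
    intro h
    have h2 : p ∣ 2 := by exact_mod_cast h
    exact hp ((Nat.prime_dvd_prime_iff_eq (Fact.out : p.Prime) Nat.prime_two).mp h2)
  linarith [lt_or_eq_of_le h1]

/-- For `p` an odd prime, `x ∈ ℤ_p` (i.e. `‖x‖ ≤ 1`) iff `1 + p·x²` is a square in `ℚ_p`. -/
theorem mem_valuationRing_iff_sq {p : ℕ} [Fact p.Prime] (hp : p ≠ 2) (x : ℚ_[p]) :
    ‖x‖ ≤ 1 ↔ ∃ y : ℚ_[p], y ^ 2 = 1 + (p : ℚ_[p]) * x ^ 2 := by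
  have hp1 : (1 : ℝ) < p := by exact_mod_cast (Fact.out : p.Prime).one_lt
  constructor
  · intro hx
    set x' : ℤ_[p] := ⟨x, hx⟩ with hx'
    set F : Polynomial ℤ_[p] := X ^ 2 - C (1 + p * x' ^ 2) with hF
    have heval : F.eval 1 = -(p * x' ^ 2) := by simp [hF]
    have hde : F.derivative.eval 1 = 2 := by simp [hF, derivative_pow]
    have hnorm : ‖F.eval 1‖ < ‖F.derivative.eval 1‖ ^ 2 := by
      rw [heval, hde]
      rw [norm_two_padic hp, one_pow, norm_neg]
      calc ‖(p : ℤ_[p]) * x' ^ 2‖ ≤ ‖(p : ℤ_[p])‖ * 1 := by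
            rw [norm_mul]
            exact mul_le_mul_of_nonneg_left (PadicInt.norm_le_one _) (norm_nonneg _)
        _ < 1 := by rw [mul_one, PadicInt.norm_p]; rw [inv_lt_one_iff₀]; right; linarith
    obtain ⟨z, hz, -⟩ := hensels_lemma hnorm
    refine ⟨(z : ℚ_[p]), ?_⟩
    have : z ^ 2 = 1 + p * x' ^ 2 := by
      have := hz
      simp [hF, sub_eq_zero] at this
      exact this
    have := congrArg (PadicInt.Coe.ringHom (p := p)) this
    push_cast at this
    exact this
  · rintro ⟨y, hy⟩
    by_contra hx
    rw [Padic.norm_le_one_iff_val_nonneg, not_le] at hx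
    have hx0 : x ≠ 0 := by rintro rfl; simp [Padic.valuation_zero] at hx
    have hpx0 : (p : ℚ_[p]) * x ^ 2 ≠ 0 := by
      exact mul_ne_zero (by exact_mod_cast (Fact.out : p.Prime).ne_zero) (pow_ne_zero _ hx0)
    have hvpx : ((p : ℚ_[p]) * x ^ 2).valuation = 1 + 2 * x.valuation := by
      rw [Padic.valuation_mul (by exact_mod_cast (Fact.out : p.Prime).ne_zero) (pow_ne_zero _ hx0),
        Padic.valuation_p, show x ^ 2 = x * x by ring, Padic.valuation_mul hx0 hx0]
      ring
    have hnormpx : ‖(p : ℚ_[p]) * x ^ 2‖ = (p : ℝ) ^ (-(1 + 2 * x.valuation)) := by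
      rw [Padic.norm_eq_zpow_neg_valuation hpx0, hvpx]
    have hgt : (1 : ℝ) < ‖(p : ℚ_[p]) * x ^ 2‖ := by
      rw [hnormpx, ← zpow_zero (p : ℝ)]
      apply zpow_lt_zpow_right₀ hp1
      omega
    have hne : ‖(1 : ℚ_[p])‖ ≠ ‖(p : ℚ_[p]) * x ^ 2‖ := by
      rw [norm_one]; exact ne_of_lt hgt
    have hsum : ‖(1 : ℚ_[p]) + (p : ℚ_[p]) * x ^ 2‖ = ‖(p : ℚ_[p]) * x ^ 2‖ := by
      rw [Padic.add_eq_max_of_ne hne, norm_one, max_eq_right (le_of_lt hgt)]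
    have hy0 : y ≠ 0 := by
      rintro rfl
      have h0 : ‖(1 : ℚ_[p]) + (p : ℚ_[p]) * x ^ 2‖ = 0 := by
        rw [← hy]; simp
      rw [h0] at hsum
      linarith
    have hval : 2 * y.valuation = 1 + 2 * x.valuation := by
      have h1 : ‖y ^ 2‖ = (p : ℝ) ^ (-(2 * y.valuation)) := by
        rw [show y ^ 2 = y * y by ring, Padic.norm_eq_zpow_neg_valuation (mul_ne_zero hy0 hy0),
          Padic.valuation_mul hy0 hy0]
        ring_nf
      rw [hy, hsum, hnormpx] at h1
      have := (zpow_right_strictMono₀ hp1).injective h1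
      omega
    omega
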